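/- Suppose the loss function f : 𝒳 × ℝ^d → ℝ is monotonic increasing, i.e. for all x ∈ 𝒳, y < ỹ componentwise implies f(x,y) < f(x,ỹ). Then the set R = { y ∈ ℝ^d : ℙ(Y > y) ≤ 1 − β } is a conservative risk region: for every y ∉ R (i.e. with ℙ(Y > y) > 1 − β) and every x ∈ 𝒳, one has F_x(f(x,y)) < β, so R ⊇ R_𝒳(β). -/

import Mathlib

open MeasureTheory Set

private lemma aux_cdf {Ω : Type*} [MeasurableSpace Ω] (ℙ : Measure Ω) [IsProbabilityMeasure ℙ]
    (g : Ω → ℝ) (hg : Measurable g) (β : ℝ) (hβ1 : β < 1) (t : ℝ)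
    (ht : sInf {z : ℝ | β ≤ (ℙ {ω | g ω ≤ z}).toReal} ≤ t) :
    β ≤ (ℙ {ω | g ω ≤ t}).toReal := by
  by_cases hβ0 : β ≤ 0
  · exact hβ0.trans ENNReal.toReal_nonneg
  push_neg at hβ0
  set S : Set ℝ := {z : ℝ | β ≤ (ℙ {ω | g ω ≤ z}).toReal} with hS
  -- S is nonempty
  have hne : S.Nonempty := by
    have hun : (⋃ n : ℕ, {ω | g ω ≤ (n : ℝ)}) = univ := by
      ext ω; simp only [mem_iUnion, mem_univ, iff_true, mem_setOf_eq]
      obtain ⟨n, hn⟩ := exists_nat_ge (g ω)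
      exact ⟨n, hn⟩
    have hmonoU : Monotone fun n : ℕ => {ω | g ω ≤ (n : ℝ)} := by
      intro a b hab ω hω
      simp only [Set.mem_setOf_eq] at hω ⊢
      exact hω.trans (by exact_mod_cast hab)
    have htend : Filter.Tendsto (fun n : ℕ => ℙ {ω | g ω ≤ (n : ℝ)}) Filter.atTop
        (nhds (ℙ (⋃ n : ℕ, {ω | g ω ≤ (n : ℝ)}))) :=
      tendsto_measure_iUnion_atTop hmonoU
    rw [hun, measure_univ] at htend
    have htend' : Filter.Tendsto (fun n : ℕ => (ℙ {ω | g ω ≤ (n : ℝ)}).toReal) Filter.atTop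
        (nhds (1 : ℝ)) := by
      have := (ENNReal.tendsto_toReal (by norm_num : (1 : ENNReal) ≠ ⊤)).comp htend
      exact this
    have := (htend'.eventually_const_lt hβ1)
    obtain ⟨n, hn⟩ := this.exists
    exact ⟨(n : ℝ), le_of_lt hn⟩
  -- every z > t is in S
  have hgt : ∀ z, t < z → β ≤ (ℙ {ω | g ω ≤ z}).toReal := by
    intro z hz
    obtain ⟨s, hsS, hslt⟩ : ∃ s ∈ S, s < z := by
      by_contra hc
      push_neg at hc
      have : z ≤ sInf S := le_csInf hne hc
      linarith
    refine hsS.trans (ENNReal.toReal_mono (measure_ne_top ℙ _) (measure_mono ?_))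
    intro ω hω; exact le_trans hω hslt.le
  -- right continuity
  set s : ℕ → Set Ω := fun n => {ω | g ω ≤ t + 1 / (n + 1)} with hsdef
  have hanti : Antitone s := by
    intro a b hab ω hω
    refine le_trans hω (add_le_add_right ?_ t)
    apply one_div_le_one_div_of_le
    · positivity
    · exact_mod_cast Nat.succ_le_succ hab
  have hmeas : ∀ n, MeasurableSet (s n) := fun n => hg measurableSet_Iic
  have hinter : (⋂ n, s n) = {ω | g ω ≤ t} := by
    ext ω
    simp only [mem_iInter, hsdef, mem_setOf_eq]
    constructor
    · intro h
      refine le_of_forall_pos_le_add fun ε hε => ?_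
      obtain ⟨n, hn⟩ := exists_nat_one_div_lt hε
      exact (h n).trans (add_le_add_right hn.le t)
    · intro h n
      have : (0 : ℝ) < 1 / (n + 1) := by positivity
      linarith
  have htendI : Filter.Tendsto (fun n => ℙ (s n)) Filter.atTop (nhds (ℙ (⋂ n, s n))) :=
    tendsto_measure_iInter_atTop (fun n => (hmeas n).nullMeasurableSet) hanti ⟨0, measure_ne_top ℙ _⟩
  have hle : ENNReal.ofReal β ≤ ℙ (⋂ n, s n) := by
    refine ge_of_tendsto htendI (Filter.Eventually.of_forall fun n => ?_)
    have hn : β ≤ (ℙ (s n)).toReal := by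
      apply hgt
      have : (0 : ℝ) < 1 / (n + 1) := by positivity
      linarith
    exact ENNReal.ofReal_le_of_le_toReal hn
  rw [hinter] at hle
  calc β = (ENNReal.ofReal β).toReal := by rw [ENNReal.toReal_ofReal hβ0.le]
    _ ≤ (ℙ {ω | g ω ≤ t}).toReal := ENNReal.toReal_mono (measure_ne_top ℙ _) hle

/-- If the loss function `f` is monotonic increasing, then
`R = {y : ℙ(Y > y) ≤ 1 − β}` is a conservative risk region: for every `y ∉ R` and every
`x ∈ 𝒳`, `F_x(f(x,y)) < β`; consequently `R_𝒳(β) ⊆ R`. -/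
theorem stmt_9 {d k : ℕ} {Ω : Type*} [MeasurableSpace Ω]
    (ℙ : Measure Ω) [IsProbabilityMeasure ℙ]
    (Y : Ω → (Fin d → ℝ)) (hY : Measurable Y)
    (𝒳 : Set (Fin k → ℝ)) (f : (Fin k → ℝ) → (Fin d → ℝ) → ℝ)
    (hf : ∀ x ∈ 𝒳, Measurable fun ω => f x (Y ω))
    (hmono : ∀ x ∈ 𝒳, ∀ y ytilde : Fin d → ℝ, (∀ i, y i < ytilde i) → f x y < f x ytilde)
    (β : ℝ) (hβ0 : 0 < β) (hβ1 : β < 1)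
    (F : (Fin k → ℝ) → ℝ → ℝ)
    (hF : ∀ x z, F x z = (ℙ {ω | f x (Y ω) ≤ z}).toReal)
    (q : (Fin k → ℝ) → ℝ)
    (hq : ∀ x, q x = sInf {z : ℝ | β ≤ F x z})
    (R : Set (Fin d → ℝ))
    (hR : R = {y : Fin d → ℝ | (ℙ {ω | ∀ i, y i < Y ω i}).toReal ≤ 1 - β}) :
    (∀ y : Fin d → ℝ, 1 - β < (ℙ {ω | ∀ i, y i < Y ω i}).toReal →
      ∀ x ∈ 𝒳, F x (f x y) < β) ∧
    (⋃ x ∈ 𝒳, {y : Fin d → ℝ | q x ≤ f x y}) ⊆ R := by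
  have hBmeas : ∀ y : Fin d → ℝ, MeasurableSet {ω | ∀ i, y i < Y ω i} := by
    intro y
    have : {ω | ∀ i, y i < Y ω i} = ⋂ i, {ω | y i < Y ω i} := by
      ext ω; simp
    rw [this]
    exact MeasurableSet.iInter fun i => measurableSet_lt measurable_const
      ((measurable_pi_apply i).comp hY)
  have part1 : ∀ y : Fin d → ℝ, 1 - β < (ℙ {ω | ∀ i, y i < Y ω i}).toReal →
      ∀ x ∈ 𝒳, F x (f x y) < β := by
    intro y hy x hx
    rw [hF]
    have hsub : {ω | f x (Y ω) ≤ f x y} ⊆ {ω | ∀ i, y i < Y ω i}ᶜ := by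
      intro ω hω hcon
      exact absurd (hmono x hx y (Y ω) hcon) (not_lt.2 hω)
    have h1 : (ℙ {ω | f x (Y ω) ≤ f x y}).toReal ≤ (ℙ {ω | ∀ i, y i < Y ω i}ᶜ).toReal :=
      ENNReal.toReal_mono (measure_ne_top ℙ _) (measure_mono hsub)
    have h2 : (ℙ {ω | ∀ i, y i < Y ω i}ᶜ).toReal = 1 - (ℙ {ω | ∀ i, y i < Y ω i}).toReal := by
      rw [prob_compl_eq_one_sub (hBmeas y)]
      rw [ENNReal.toReal_sub_of_le (prob_le_one) (by norm_num)]
      simp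
    rw [h2] at h1
    linarith
  refine ⟨part1, ?_⟩
  intro y hy
  simp only [mem_iUnion, mem_setOf_eq] at hy
  obtain ⟨x, hx, hqx⟩ := hy
  rw [hR, mem_setOf_eq]
  by_contra hc
  push_neg at hc
  have hlt := part1 y hc x hx
  have hge : β ≤ F x (f x y) := by
    rw [hF]
    apply aux_cdf ℙ _ (hf x hx) β hβ1
    have hset : {z : ℝ | β ≤ F x z} = {z : ℝ | β ≤ (ℙ {ω | f x (Y ω) ≤ z}).toReal} := by
      ext z; simp [hF]
    rw [← hset, ← hq x]
    exact hqx
  linarith
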